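/- Let X be a Banach space whose norm has modulus of uniform convexity δ_X(ε) = Aεᵖ for all ε ∈ (0,2], with A ∈ (0,1/2) and p ≥ 2. Then the function x ↦ (1/p)‖x‖ᵖ is uniformly convex on all of X with modulus (A/8ᵖ)εᵖ; that is, for all x, y ∈ X with ‖x−y‖ ≥ ε > 0: (1/p)‖(x+y)/2‖ᵖ ≤ (1/2p)‖x‖ᵖ + (1/2p)‖y‖ᵖ − (A/8ᵖ)εᵖ. -/

import Mathlib

open Real Set

private lemma rpow_eq_rpow_sub_one_mul {x q : ℝ} (hx : 0 ≤ x) (hq : 1 ≤ q) :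
    x ^ q = x ^ (q - 1) * x := by
  rcases eq_or_lt_of_le hx with h | h
  · rw [← h, Real.zero_rpow (by linarith : q ≠ 0), mul_zero]
  · rw [← Real.rpow_add_one h.ne', sub_add_cancel]

/-- superadditivity of `t ↦ t^q` for `q ≥ 1` on nonneg reals -/
private lemma rpow_superadd {x y q : ℝ} (hx : 0 ≤ x) (hy : 0 ≤ y) (hq : 1 ≤ q) :
    x ^ q + y ^ q ≤ (x + y) ^ q := by
  have hq0 : (0:ℝ) ≤ q - 1 := by linarith
  have h1 : x ^ q ≤ (x + y) ^ (q - 1) * x := by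
    rw [rpow_eq_rpow_sub_one_mul hx hq]
    exact mul_le_mul_of_nonneg_right (Real.rpow_le_rpow hx (by linarith) hq0) hx
  have h2 : y ^ q ≤ (x + y) ^ (q - 1) * y := by
    rw [rpow_eq_rpow_sub_one_mul hy hq]
    exact mul_le_mul_of_nonneg_right (Real.rpow_le_rpow hy (by linarith) hq0) hy
  have h3 : (x + y) ^ q = (x + y) ^ (q - 1) * (x + y) :=
    rpow_eq_rpow_sub_one_mul (by linarith) hq
  rw [h3]; nlinarith [h1, h2]

/-- Bernoulli: `p ≤ 2^(p-1)` for `p ≥ 2`. -/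
private lemma self_le_two_rpow {p : ℝ} (hp : 2 ≤ p) : p ≤ 2 ^ (p - 1) := by
  have h := one_add_mul_self_le_rpow_one_add (by norm_num : (-1:ℝ) ≤ 1)
    (by linarith : 1 ≤ p - 1)
  norm_num at h
  linarith

/-- Clarkson's inequality on `ℝ`. -/
private lemma clarkson_real {p a b : ℝ} (hp : 2 ≤ p) (hb : 0 ≤ b) (hba : b ≤ a) :
    ((a+b)/2)^p + ((a-b)/2)^p ≤ a^p/2 + b^p/2 := by
  have hp1 : (1:ℝ) ≤ p := by linarith
  have hp0 : (0:ℝ) < p := by linarith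
  rcases eq_or_lt_of_le (show (0:ℝ) ≤ (a+b)/2 by linarith) with h0 | hc
  · have ha0 : a = 0 := by linarith
    have hb0 : b = 0 := by linarith
    simp [ha0, hb0, Real.zero_rpow hp0.ne']
  · set c := (a+b)/2 with hcdef
    set F : ℝ → ℝ := fun t => (c+t)^p + (c-t)^p - 2*t^p with hF
    have hder : ∀ t ∈ Ioo (0:ℝ) c,
        HasDerivAt F (p*(c+t)^(p-1)*1 + p*(c-t)^(p-1)*(-1) - 2*(p*t^(p-1))) t := by
      intro t ht
      have h1 : HasDerivAt (fun s : ℝ => (c+s)^p) (p*(c+t)^(p-1)*1) t := by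
        exact (Real.hasDerivAt_rpow_const (x := c + t) (p := p)
          (Or.inl (by nlinarith [ht.1, ht.2] : c + t ≠ 0))).comp t
          ((hasDerivAt_id t).const_add c)
      have h2 : HasDerivAt (fun s : ℝ => (c-s)^p) (p*(c-t)^(p-1)*(-1)) t := by
        exact (Real.hasDerivAt_rpow_const (x := c - t) (p := p)
          (Or.inl (by nlinarith [ht.1, ht.2] : c - t ≠ 0))).comp t
          ((hasDerivAt_id t).const_sub c)
      have h3 : HasDerivAt (fun s : ℝ => 2*s^p) (2*(p*t^(p-1))) t :=
        (Real.hasDerivAt_rpow_const (x := t) (p := p) (Or.inl ht.1.ne')).const_mul 2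
      exact (h1.add h2).sub h3
    have hmono : MonotoneOn F (Icc 0 c) := by
      apply monotoneOn_of_deriv_nonneg (convex_Icc 0 c)
      · apply ContinuousOn.sub
        · apply ContinuousOn.add
          · exact ((continuous_const.add continuous_id).continuousOn).rpow_const
              (fun t _ => Or.inr hp0.le)
          · exact ((continuous_const.sub continuous_id).continuousOn).rpow_const
              (fun t _ => Or.inr hp0.le)
        · exact (continuousOn_const.mul (continuousOn_id.rpow_const
            (fun t _ => Or.inr hp0.le))).mono (subset_univ _)
      · intro t ht
        rw [interior_Icc] at ht
        exact ((hder t ht).differentiableAt).differentiableWithinAt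
      · intro t ht
        rw [interior_Icc] at ht
        rw [(hder t ht).deriv]
        have hsup : (c-t)^(p-1) + (2*t)^(p-1) ≤ (c+t)^(p-1) := by
          have h := rpow_superadd (x := c - t) (y := 2*t) (q := p - 1)
            (by linarith [ht.2] : (0:ℝ) ≤ c - t)
            (by linarith [ht.1] : (0:ℝ) ≤ 2*t) (by linarith : (1:ℝ) ≤ p - 1)
          have e : c - t + 2*t = c + t := by ring
          rwa [e] at h
        have h2t : (2*t)^(p-1) = 2^(p-1) * t^(p-1) :=
          Real.mul_rpow (by norm_num) ht.1.le
        have h2ge : (2:ℝ) ≤ 2^(p-1) := by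
          have := Real.rpow_le_rpow_of_exponent_le (by norm_num : (1:ℝ) ≤ 2)
            (by linarith : (1:ℝ) ≤ p - 1)
          rwa [Real.rpow_one] at this
        have htp : (0:ℝ) ≤ t^(p-1) := Real.rpow_nonneg ht.1.le _
        have hb2 : 2*t^(p-1) ≤ (c+t)^(p-1) - (c-t)^(p-1) := by nlinarith [hsup, h2t, h2ge, htp]
        nlinarith [mul_le_mul_of_nonneg_left hb2 hp0.le]
    set v := (a-b)/2 with hvdef
    have hv : v ∈ Icc (0:ℝ) c := ⟨by simp [hvdef]; linarith, by simp [hvdef, hcdef]; linarith⟩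
    have := hmono (left_mem_Icc.2 hc.le) hv hv.1
    have hF0 : F 0 = 2*c^p := by
      simp [hF, Real.zero_rpow hp0.ne']
      ring
    have hFv : F v = a^p + b^p - 2*v^p := by
      have e1 : c + v = a := by rw [hcdef, hvdef]; ring
      have e2 : c - v = b := by rw [hcdef, hvdef]; ring
      simp [hF, e1, e2]
    rw [hF0, hFv] at this
    linarith

/-- gain from linearization: `(M-t)^p ≤ M^p - M^(p-1) t`. -/
private lemma pow_gain {p M t : ℝ} (hp : 1 ≤ p) (hM : 0 < M) (ht : 0 ≤ t) (htM : t ≤ M) :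
    (M - t)^p ≤ M^p - M^(p-1) * t := by
  have h1 : M^p = M^(p-1) * M := rpow_eq_rpow_sub_one_mul hM.le hp
  have h2 : (M-t)^p = (M-t)^(p-1) * (M-t) :=
    rpow_eq_rpow_sub_one_mul (by linarith) hp
  have h3 : (M-t)^(p-1) ≤ M^(p-1) :=
    Real.rpow_le_rpow (by linarith) (by linarith) (by linarith)
  rw [h1, h2]
  nlinarith [h3]

set_option maxHeartbeats 1000000 in
private lemma main_aux {X : Type*} [NormedAddCommGroup X] [NormedSpace ℝ X]
    (p A : ℝ) (hp : 2 ≤ p) (hA : 0 < A) (hA2 : A < 1/2)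
    (hX : ∀ ε ∈ Set.Ioc (0:ℝ) 2, ∀ u v : X, ‖u‖ ≤ 1 → ‖v‖ ≤ 1 → ε ≤ ‖u - v‖ →
      ‖(1/2 : ℝ) • (u + v)‖ ≤ 1 - A * ε ^ p)
    (x y : X) (hba : ‖y‖ ≤ ‖x‖) (hd : 0 < ‖x - y‖) :
    ‖(1/2:ℝ) • (x+y)‖^p + (p*A/8^p) * ‖x-y‖^p ≤ ‖x‖^p/2 + ‖y‖^p/2 := by
  have hp1 : (1:ℝ) ≤ p := by linarith
  have hp0 : (0:ℝ) < p := by linarith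
  set a := ‖x‖ with hadef
  set b := ‖y‖ with hbdef
  set d := ‖x - y‖ with hddef
  have hb0 : 0 ≤ b := norm_nonneg y
  have ha0 : 0 ≤ a := norm_nonneg x
  have hdab : d ≤ a + b := norm_sub_le x y
  have hm : ‖(1/2:ℝ) • (x+y)‖ = ‖x+y‖/2 := by
    rw [norm_smul]; simp [Real.norm_eq_abs]; ring
  have hmab : ‖x+y‖ ≤ a + b := norm_add_le x y
  have h8 : (0:ℝ) < (8:ℝ)^p := Real.rpow_pos_of_pos (by norm_num) _
  have h2p : (0:ℝ) < (2:ℝ)^p := Real.rpow_pos_of_pos (by norm_num) _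
  have h4p : (0:ℝ) < (4:ℝ)^p := Real.rpow_pos_of_pos (by norm_num) _
  have hberq : p ≤ 2^(p-1) := self_le_two_rpow hp
  have h2p1 : (2:ℝ)^p = 2^(p-1) * 2 := by
    rw [← Real.rpow_add_one (by norm_num : (2:ℝ) ≠ 0), sub_add_cancel]
  have hpA2p : p * A ≤ 2^p := by nlinarith
  have hdp0 : (0:ℝ) ≤ d^p := Real.rpow_nonneg hd.le _
  by_cases hcase : d/2 ≤ a - b
  · -- Case A : norms far apart, use real Clarkson
    have hmp : ‖(1/2:ℝ) • (x+y)‖^p ≤ ((a+b)/2)^p := by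
      apply Real.rpow_le_rpow (norm_nonneg _) _ hp0.le
      rw [hm]; linarith
    have hclark := clarkson_real hp hb0 hba
    have hd4 : (d/4)^p ≤ ((a-b)/2)^p :=
      Real.rpow_le_rpow (by linarith) (by linarith) hp0.le
    have hd4' : (d/4)^p = d^p/4^p := Real.div_rpow hd.le (by norm_num) p
    have h84 : (8:ℝ)^p = 2^p * 4^p := by
      rw [← Real.mul_rpow (by norm_num) (by norm_num)]; norm_num
    have hfinal : (p*A/8^p) * d^p ≤ (d/4)^p := by
      rw [hd4']
      rw [div_mul_eq_mul_div, div_le_div_iff₀ h8 h4p]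
      calc p*A*d^p*4^p ≤ 2^p*d^p*4^p := by
            nlinarith [mul_le_mul_of_nonneg_right (mul_le_mul_of_nonneg_right hpA2p hdp0) h4p.le]
        _ = d^p*8^p := by rw [h84]; ring
    linarith
  · -- Case B : norms close, use uniform convexity of the space
    push_neg at hcase
    have hapos : 0 < a := by linarith
    have hbya : a/3 ≤ b := by
      rcases le_or_gt d (4*a/3) with h | h
      · linarith
      · have : d - a ≤ b := by linarith
        linarith
    have hbpos : 0 < b := by linarith
    set u : X := a⁻¹ • x with hudef
    set v : X := b⁻¹ • y with hvdef
    have hu1 : ‖u‖ = 1 := by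
      rw [hudef, norm_smul, Real.norm_eq_abs, abs_of_pos (inv_pos.2 hapos), ← hadef]
      field_simp
    have hv1 : ‖v‖ = 1 := by
      rw [hvdef, norm_smul, Real.norm_eq_abs, abs_of_pos (inv_pos.2 hbpos), ← hbdef]
      field_simp
    have hxu : x = a • u := by rw [hudef, smul_inv_smul₀ hapos.ne']
    have hyv : y = b • v := by rw [hvdef, smul_inv_smul₀ hbpos.ne']
    set ε₀ : ℝ := (d - (a - b))/a with hε₀def
    have hε₀pos : 0 < ε₀ := by
      apply div_pos _ hapos; linarith
    have huvlow : ε₀ ≤ ‖u - v‖ := by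
      have hid : x - y = a • (u - v) + (a-b) • v := by
        rw [hxu, hyv]; module
      have : d ≤ a * ‖u - v‖ + (a - b) := by
        calc d = ‖a • (u - v) + (a-b) • v‖ := by rw [← hid]
          _ ≤ ‖a • (u - v)‖ + ‖(a-b) • v‖ := norm_add_le _ _
          _ = a * ‖u - v‖ + (a - b) := by
              rw [norm_smul, norm_smul, Real.norm_eq_abs, Real.norm_eq_abs,
                abs_of_pos hapos, abs_of_nonneg (by linarith : (0:ℝ) ≤ a - b), hv1, mul_one]
      rw [hε₀def, div_le_iff₀ hapos]
      linarith [this]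
    have hε₀2 : ε₀ ≤ 2 := by
      calc ε₀ ≤ ‖u - v‖ := huvlow
        _ ≤ ‖u‖ + ‖v‖ := norm_sub_le u v
        _ = 2 := by rw [hu1, hv1]; norm_num
    have hUC := hX ε₀ ⟨hε₀pos, hε₀2⟩ u v hu1.le hv1.le huvlow
    have huv2 : ‖u + v‖ ≤ 2*(1 - A*ε₀^p) := by
      have : ‖(1/2:ℝ) • (u+v)‖ = ‖u+v‖/2 := by
        rw [norm_smul]; simp [Real.norm_eq_abs]; ring
      rw [this] at hUC; linarith
    set M : ℝ := (a+b)/2 with hMdef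
    set τ : ℝ := b * (A * ε₀^p) with hτdef
    have hτ0 : 0 ≤ τ := by
      apply mul_nonneg hbpos.le
      exact mul_nonneg hA.le (Real.rpow_nonneg hε₀pos.le _)
    have hmMτ : ‖(1/2:ℝ) • (x+y)‖ ≤ M - τ := by
      have hid : x + y = b • (u + v) + (a-b) • u := by
        rw [hxu, hyv]; module
      have h1 : ‖x + y‖ ≤ b * ‖u+v‖ + (a-b) := by
        calc ‖x+y‖ = ‖b • (u + v) + (a-b) • u‖ := by rw [← hid]
          _ ≤ ‖b • (u+v)‖ + ‖(a-b) • u‖ := norm_add_le _ _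
          _ = b * ‖u+v‖ + (a-b) := by
              rw [norm_smul, norm_smul, Real.norm_eq_abs, Real.norm_eq_abs,
                abs_of_pos hbpos, abs_of_nonneg (by linarith : (0:ℝ) ≤ a - b), hu1, mul_one]
      have h2 : ‖x+y‖ ≤ b * (2*(1 - A*ε₀^p)) + (a-b) := by
        have hb2 := mul_le_mul_of_nonneg_left huv2 hbpos.le
        linarith [h1, hb2]
      rw [hm, hMdef, hτdef]
      linarith [h2]
    have hm0 : 0 ≤ ‖(1/2:ℝ) • (x+y)‖ := norm_nonneg _
    have hτM : τ ≤ M := by linarith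
    have hM0 : 0 < M := by rw [hMdef]; linarith
    have hmp : ‖(1/2:ℝ) • (x+y)‖^p ≤ M^p - M^(p-1)*τ := by
      calc ‖(1/2:ℝ) • (x+y)‖^p ≤ (M - τ)^p :=
            Real.rpow_le_rpow hm0 hmMτ hp0.le
        _ ≤ M^p - M^(p-1)*τ := pow_gain hp1 hM0 hτ0 hτM
    have hMp : M^p ≤ a^p/2 + b^p/2 := by
      have := clarkson_real hp hb0 hba
      have hv0 : (0:ℝ) ≤ ((a-b)/2)^p := Real.rpow_nonneg (by linarith) _
      rw [hMdef]; linarith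
    -- lower bound for M^(p-1) * τ
    have hMlb : (2*a/3 : ℝ) ≤ M := by rw [hMdef]; linarith
    have hM1 : (2/3:ℝ)^(p-1) * a^(p-1) ≤ M^(p-1) := by
      have : ((2/3:ℝ) * a)^(p-1) ≤ M^(p-1) :=
        Real.rpow_le_rpow (by positivity) (by linarith) (by linarith)
      rwa [Real.mul_rpow (by norm_num) ha0] at this
    have hε₀lb : d/(2*a) ≤ ε₀ := by
      rw [hε₀def, div_le_div_iff₀ (by positivity) hapos]
      have hprod0 : 0 < a * (d - 2*(a-b)) := mul_pos hapos (by linarith)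
      linarith [hprod0]
    have hε₀p : (d/(2*a))^p ≤ ε₀^p :=
      Real.rpow_le_rpow (by positivity) hε₀lb hp0.le
    have hdiv : (d/(2*a))^p = d^p/(2^p * a^p) := by
      rw [Real.div_rpow hd.le (by positivity), Real.mul_rpow (by norm_num) ha0]
    have hap : (0:ℝ) < a^p := Real.rpow_pos_of_pos hapos _
    have hτlb : (a/3) * (A * (d^p/(2^p * a^p))) ≤ τ := by
      rw [hτdef]
      apply mul_le_mul (by linarith) _ (by positivity) hb0
      apply mul_le_mul_of_nonneg_left _ hA.le
      rw [← hdiv]; exact hε₀p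
    have hprod : ((2/3:ℝ)^(p-1) * a^(p-1)) * ((a/3) * (A * (d^p/(2^p * a^p))))
        ≤ M^(p-1) * τ := by
      apply mul_le_mul hM1 hτlb (by positivity) (by positivity)
    have hcancel : ((2/3:ℝ)^(p-1) * a^(p-1)) * ((a/3) * (A * (d^p/(2^p * a^p))))
        = (2/3:ℝ)^(p-1) * A * d^p / (3 * 2^p) := by
      have haa : a^(p-1) * a = a^p := (rpow_eq_rpow_sub_one_mul ha0 hp1).symm
      calc ((2/3:ℝ)^(p-1) * a^(p-1)) * ((a/3) * (A * (d^p/(2^p * a^p))))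
          = (2/3:ℝ)^(p-1) * A * d^p / (3 * 2^p) * ((a^(p-1) * a) / a^p) := by ring
        _ = (2/3:ℝ)^(p-1) * A * d^p / (3 * 2^p) := by
            rw [haa, div_self hap.ne', mul_one]
    -- the numeric constant inequality
    have hconst : p * A / 8^p * d^p ≤ (2/3:ℝ)^(p-1) * A * d^p / (3 * 2^p) := by
      have h23 : ((2/3:ℝ))^(p-1) = (2/3)^p * (3/2) := by
        rw [Real.rpow_sub_one (by norm_num : (2/3:ℝ) ≠ 0)]; ring
      have h238 : ((2/3:ℝ))^p * 8^p = (16/3)^p := by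
        rw [← Real.mul_rpow (by norm_num) (by norm_num)]; norm_num
      have h163 : ((16/3:ℝ))^p = (8/3)^p * 2^p := by
        rw [← Real.mul_rpow (by norm_num) (by norm_num)]; norm_num
      have h83 : (2:ℝ)^p ≤ (8/3)^p :=
        Real.rpow_le_rpow (by norm_num) (by norm_num) hp0.le
      have h2pp : 2*p ≤ (2:ℝ)^p := by rw [h2p1]; linarith
      rw [div_mul_eq_mul_div, div_le_div_iff₀ h8 (by positivity)]
      have key : p * 3 * 2^p ≤ (2/3:ℝ)^(p-1) * 8^p := by
        have hK : (2/3:ℝ)^(p-1) * 8^p = 3/2 * ((8/3)^p * 2^p) := by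
          calc (2/3:ℝ)^(p-1) * 8^p = 3/2 * ((2/3:ℝ)^p * 8^p) := by rw [h23]; ring
            _ = 3/2 * ((16/3:ℝ)^p) := by rw [h238]
            _ = 3/2 * ((8/3)^p * 2^p) := by rw [h163]
        rw [hK]
        linarith [mul_le_mul_of_nonneg_right h2pp h2p.le,
          mul_le_mul_of_nonneg_right h83 h2p.le]
      calc p * A * d^p * (3 * 2^p) = (p * 3 * 2^p) * (A * d^p) := by ring
        _ ≤ ((2/3:ℝ)^(p-1) * 8^p) * (A * d^p) := by
            apply mul_le_mul_of_nonneg_right key (by positivity)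
        _ = (2/3:ℝ)^(p-1) * A * d^p * 8^p := by ring
    have : p * A / 8^p * d^p ≤ M^(p-1) * τ := by
      calc p * A / 8^p * d^p ≤ (2/3:ℝ)^(p-1) * A * d^p / (3 * 2^p) := hconst
        _ = ((2/3:ℝ)^(p-1) * a^(p-1)) * ((a/3) * (A * (d^p/(2^p * a^p)))) := hcancel.symm
        _ ≤ M^(p-1) * τ := hprod
    linarith

/-- If `X` has modulus of uniform convexity `A εᵖ`, then `x ↦ (1/p)‖x‖ᵖ` is uniformly
convex on all of `X` with modulus `(A/8ᵖ) εᵖ`. -/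
theorem stmt_14 {X : Type*} [NormedAddCommGroup X] [NormedSpace ℝ X]
    (p A : ℝ) (hp : 2 ≤ p) (hA : 0 < A) (hA2 : A < 1/2)
    (hX : ∀ ε ∈ Set.Ioc (0:ℝ) 2, ∀ u v : X, ‖u‖ ≤ 1 → ‖v‖ ≤ 1 → ε ≤ ‖u - v‖ →
      ‖(1/2 : ℝ) • (u + v)‖ ≤ 1 - A * ε ^ p) :
    ∀ ε > (0:ℝ), ∀ x y : X, ε ≤ ‖x - y‖ →
      (1 / p) * ‖(1/2 : ℝ) • (x + y)‖ ^ p ≤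
        (1 / (2 * p)) * ‖x‖ ^ p + (1 / (2 * p)) * ‖y‖ ^ p - (A / 8 ^ p) * ε ^ p := by
  intro ε hε x y hεd
  have hp0 : (0:ℝ) < p := by linarith
  have hd : 0 < ‖x - y‖ := lt_of_lt_of_le hε hεd
  have h8 : (0:ℝ) < (8:ℝ)^p := Real.rpow_pos_of_pos (by norm_num) _
  have hεp : ε^p ≤ ‖x - y‖^p := Real.rpow_le_rpow hε.le hεd hp0.le
  have key : ‖(1/2:ℝ) • (x+y)‖^p + (p*A/8^p) * ‖x-y‖^p ≤ ‖x‖^p/2 + ‖y‖^p/2 := by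
    rcases le_total ‖y‖ ‖x‖ with h | h
    · exact main_aux p A hp hA hA2 hX x y h hd
    · have hd' : 0 < ‖y - x‖ := by rwa [norm_sub_rev]
      have := main_aux p A hp hA hA2 hX y x h hd'
      have e1 : (1/2:ℝ) • (y+x) = (1/2:ℝ) • (x+y) := by rw [add_comm]
      have e2 : ‖y - x‖ = ‖x - y‖ := norm_sub_rev y x
      rw [e1, e2] at this
      linarith
  have hmul := mul_le_mul_of_nonneg_left key (by positivity : (0:ℝ) ≤ 1/p)
  have hid : (1/p) * ((p*A/8^p) * ‖x-y‖^p) = (A/8^p) * ‖x-y‖^p := by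
    field_simp
  have hεd2 : (A/8^p) * ε^p ≤ (A/8^p) * ‖x-y‖^p := by
    apply mul_le_mul_of_nonneg_left hεp (by positivity)
  have hexp : (1/p) * (‖x‖^p/2 + ‖y‖^p/2) = (1/(2*p)) * ‖x‖^p + (1/(2*p)) * ‖y‖^p := by
    have h12 : (1:ℝ)/(2*p) = (1/p)*(1/2) := by
      rw [one_div_mul_one_div, mul_comm]
    rw [h12]; ring
  rw [mul_add, hid, hexp] at hmul
  linarith [hmul, hεd2]
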